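/- Let H be a one-parameter group {Φ_κ(t)}_{κ ∈ 2^ℕ} of measure-preserving transformations of a Polish probability space Q, and suppose that for each t ∈ ℝ, Φ_κ(t, q) converges almost surely as κ → ∞ to some Φ(t, q). Then each Φ(t) is measure-preserving and for all s, t ∈ ℝ, Φ(t + s, q) = Φ(t)(Φ(s, q)) almost surely. -/

import Mathlib

open MeasureTheory Filter Topology

private lemma intComp' {Q : Type*} [MeasurableSpace Q] {μ : Measure Q}
    {φ : Q → Q} (hφ : MeasurePreserving φ μ μ) {h : Q → ℝ} (hm : Measurable h) :
    ∫ x, h (φ x) ∂μ = ∫ x, h x ∂μ := by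
  have hsm : AEStronglyMeasurable h (Measure.map φ μ) := by
    rw [hφ.map_eq]; exact hm.aestronglyMeasurable
  have := integral_map hφ.measurable.aemeasurable hsm
  rw [hφ.map_eq] at this
  exact this.symm

private lemma dctAbs' {Q : Type*} [MeasurableSpace Q] {μ : Measure Q}
    [IsProbabilityMeasure μ] {h : ℕ → Q → ℝ}
    (hm : ∀ n, AEStronglyMeasurable (h n) μ)
    (hb : ∀ n q, |h n q| ≤ 2)
    (hlim : ∀ᵐ q ∂μ, Tendsto (fun n => h n q) atTop (nhds 0)) :
    Tendsto (fun n => ∫ q, h n q ∂μ) atTop (nhds 0) := by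
  have := tendsto_integral_of_dominated_convergence (μ := μ) (F := h)
    (f := fun _ => (0 : ℝ)) (fun _ => (2 : ℝ)) hm (integrable_const 2)
    (fun n => Eventually.of_forall fun q => by simpa [Real.norm_eq_abs] using hb n q) hlim
  simpa using this

/-- Bounded measurable functions compose continuously (in `L¹`) with a.e. convergent
sequences of measure preserving maps. -/
private lemma lemA' {Q : Type*} [MetricSpace Q] [MeasurableSpace Q] [BorelSpace Q]
    {μ : Measure Q} [IsProbabilityMeasure μ]
    {g : ℕ → Q → Q} {glim : Q → Q}
    (hg : ∀ n, MeasurePreserving (g n) μ μ) (hglim : MeasurePreserving glim μ μ)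
    (hconv : ∀ᵐ q ∂μ, Tendsto (fun n => g n q) atTop (nhds (glim q)))
    {F : Q → ℝ} (hFm : Measurable F) (hFb : ∀ x, |F x| ≤ 1) :
    Tendsto (fun n => ∫ q, |F (g n q) - F (glim q)| ∂μ) atTop (nhds 0) := by
  have hFint : Integrable F μ :=
    (integrable_const (1 : ℝ)).mono' hFm.aestronglyMeasurable
      (Eventually.of_forall fun x => by simpa [Real.norm_eq_abs] using hFb x)
  rw [Metric.tendsto_atTop]
  intro ε hε
  obtain ⟨G, hG, hGint⟩ := hFint.exists_boundedContinuous_integral_sub_le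
    (show (0:ℝ) < ε/4 by linarith)
  -- the middle term tends to 0 by dominated convergence
  have hGb : ∀ x, |(G : Q → ℝ) x| ≤ ‖G‖ := fun x => by
    simpa [Real.norm_eq_abs] using G.norm_coe_le_norm x
  have hnormG : (0:ℝ) ≤ ‖G‖ := norm_nonneg _
  have hmid : Tendsto (fun n => ∫ q, |(G : Q → ℝ) (g n q) - G (glim q)| ∂μ) atTop (nhds 0) := by
    have hFmeas : ∀ n, AEStronglyMeasurable
        (fun q => |(G : Q → ℝ) (g n q) - G (glim q)|) μ :=
      fun n => ((G.continuous.measurable.comp (hg n).measurable).sub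
        (G.continuous.measurable.comp hglim.measurable)).abs.aestronglyMeasurable
    have := tendsto_integral_of_dominated_convergence (μ := μ)
      (F := fun n q => |(G : Q → ℝ) (g n q) - G (glim q)|)
      (f := fun _ => (0 : ℝ)) (fun _ => 2 * ‖G‖) hFmeas
      ((integrable_const (2 * ‖G‖)))
      (fun n => Eventually.of_forall fun q => by
        have h1 := hGb (g n q); have h2 := hGb (glim q)
        rw [Real.norm_eq_abs, abs_abs]
        calc |(G : Q → ℝ) (g n q) - G (glim q)|
            ≤ |(G : Q → ℝ) (g n q)| + |(G : Q → ℝ) (glim q)| := abs_sub _ _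
          _ ≤ 2 * ‖G‖ := by linarith)
      (by
        filter_upwards [hconv] with q hq
        have : Tendsto (fun n => (G : Q → ℝ) (g n q)) atTop (nhds (G (glim q))) :=
          (G.continuous.tendsto _).comp hq
        have h2 := (this.sub (tendsto_const_nhds (x := (G : Q → ℝ) (glim q)))).abs
        simpa using h2)
    simpa using this
  rw [Metric.tendsto_atTop] at hmid
  obtain ⟨N, hN⟩ := hmid (ε/4) (by linarith)
  refine ⟨N, fun n hn => ?_⟩
  have hmidn : ∫ q, |(G : Q → ℝ) (g n q) - G (glim q)| ∂μ < ε/4 := by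
    have := hN n hn
    rw [Real.dist_eq, sub_zero] at this
    calc ∫ q, |(G : Q → ℝ) (g n q) - G (glim q)| ∂μ
        ≤ |∫ q, |(G : Q → ℝ) (g n q) - G (glim q)| ∂μ| := le_abs_self _
      _ < ε/4 := this
  -- assemble the triangle inequality
  have meas1 : Measurable fun q => |F (g n q) - (G : Q → ℝ) (g n q)| :=
    ((hFm.comp (hg n).measurable).sub (G.continuous.measurable.comp (hg n).measurable)).abs
  have meas2 : Measurable fun q => |(G : Q → ℝ) (g n q) - G (glim q)| :=
    ((G.continuous.measurable.comp (hg n).measurable).sub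
      (G.continuous.measurable.comp hglim.measurable)).abs
  have meas3 : Measurable fun q => |(G : Q → ℝ) (glim q) - F (glim q)| :=
    ((G.continuous.measurable.comp hglim.measurable).sub (hFm.comp hglim.measurable)).abs
  have boundedInt : ∀ {u : Q → ℝ}, Measurable u → (∀ q, |u q| ≤ 2 + 2 * ‖G‖) →
      Integrable u μ := fun hu hub =>
    (integrable_const (2 + 2 * ‖G‖)).mono' hu.aestronglyMeasurable
      (Eventually.of_forall fun q => by simpa [Real.norm_eq_abs] using hub q)
  have int1 : Integrable (fun q => |F (g n q) - (G : Q → ℝ) (g n q)|) μ :=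
    boundedInt meas1 fun q => by
      have := hFb (g n q); have := hGb (g n q)
      rw [abs_abs]
      calc |F (g n q) - (G : Q → ℝ) (g n q)| ≤ |F (g n q)| + |(G : Q → ℝ) (g n q)| :=
            abs_sub _ _
        _ ≤ 2 + 2 * ‖G‖ := by linarith
  have int2 : Integrable (fun q => |(G : Q → ℝ) (g n q) - G (glim q)|) μ :=
    boundedInt meas2 fun q => by
      have := hGb (g n q); have := hGb (glim q)
      rw [abs_abs]
      calc |(G : Q → ℝ) (g n q) - G (glim q)| ≤ |(G : Q → ℝ) (g n q)| + |(G : Q → ℝ) (glim q)| :=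
            abs_sub _ _
        _ ≤ 2 + 2 * ‖G‖ := by linarith
  have int3 : Integrable (fun q => |(G : Q → ℝ) (glim q) - F (glim q)|) μ :=
    boundedInt meas3 fun q => by
      have := hFb (glim q); have := hGb (glim q)
      rw [abs_abs]
      calc |(G : Q → ℝ) (glim q) - F (glim q)| ≤ |(G : Q → ℝ) (glim q)| + |F (glim q)| :=
            abs_sub _ _
        _ ≤ 2 + 2 * ‖G‖ := by linarith
  have intmain : Integrable (fun q => |F (g n q) - F (glim q)|) μ :=
    boundedInt (((hFm.comp (hg n).measurable).sub (hFm.comp hglim.measurable)).abs)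
      fun q => by
        have h1 := hFb (g n q); have h2 := hFb (glim q)
        rw [abs_abs]
        calc |F (g n q) - F (glim q)| ≤ |F (g n q)| + |F (glim q)| := abs_sub _ _
          _ ≤ 2 + 2 * ‖G‖ := by linarith
  have e1 : ∫ q, (|F (g n q) - (G : Q → ℝ) (g n q)| + |(G : Q → ℝ) (g n q) - G (glim q)|
        + |(G : Q → ℝ) (glim q) - F (glim q)|) ∂μ
      = ∫ q, (|F (g n q) - (G : Q → ℝ) (g n q)| + |(G : Q → ℝ) (g n q) - G (glim q)|) ∂μ
        + ∫ q, |(G : Q → ℝ) (glim q) - F (glim q)| ∂μ :=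
    integral_add (int1.add int2) int3
  have e2 : ∫ q, (|F (g n q) - (G : Q → ℝ) (g n q)| + |(G : Q → ℝ) (g n q) - G (glim q)|) ∂μ
      = ∫ q, |F (g n q) - (G : Q → ℝ) (g n q)| ∂μ
        + ∫ q, |(G : Q → ℝ) (g n q) - G (glim q)| ∂μ :=
    integral_add int1 int2
  have hstep : ∫ q, |F (g n q) - F (glim q)| ∂μ
      ≤ ∫ q, |F (g n q) - (G : Q → ℝ) (g n q)| ∂μ
        + ∫ q, |(G : Q → ℝ) (g n q) - G (glim q)| ∂μ
        + ∫ q, |(G : Q → ℝ) (glim q) - F (glim q)| ∂μ := by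
    rw [← e2, ← e1]
    refine integral_mono intmain ((int1.add int2).add int3) fun q => ?_
    calc |F (g n q) - F (glim q)|
        ≤ |F (g n q) - (G : Q → ℝ) (glim q)| + |(G : Q → ℝ) (glim q) - F (glim q)| :=
          abs_sub_le _ _ _
      _ ≤ (|F (g n q) - (G : Q → ℝ) (g n q)| + |(G : Q → ℝ) (g n q) - G (glim q)|)
          + |(G : Q → ℝ) (glim q) - F (glim q)| := by
          have := abs_sub_le (F (g n q)) ((G : Q → ℝ) (g n q)) ((G : Q → ℝ) (glim q))
          linarith
      _ = _ := rfl
  have heq1 : ∫ q, |F (g n q) - (G : Q → ℝ) (g n q)| ∂μ = ∫ x, |F x - (G : Q → ℝ) x| ∂μ :=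
    intComp' (hg n) (hFm.sub G.continuous.measurable).abs
  have heq3 : ∫ q, |(G : Q → ℝ) (glim q) - F (glim q)| ∂μ = ∫ x, |(G : Q → ℝ) x - F x| ∂μ :=
    intComp' hglim (G.continuous.measurable.sub hFm).abs
  have hFG : ∫ x, |F x - (G : Q → ℝ) x| ∂μ ≤ ε/4 := by
    have : (fun x => |F x - (G : Q → ℝ) x|) = fun x => ‖F x - (G : Q → ℝ) x‖ := by
      funext x; rw [Real.norm_eq_abs]
    rw [this]; exact hG
  have hGF : ∫ x, |(G : Q → ℝ) x - F x| ∂μ ≤ ε/4 := by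
    have : (fun x => |(G : Q → ℝ) x - F x|) = fun x => ‖F x - (G : Q → ℝ) x‖ := by
      funext x; rw [Real.norm_eq_abs, abs_sub_comm]
    rw [this]; exact hG
  have hnonneg : (0:ℝ) ≤ ∫ q, |F (g n q) - F (glim q)| ∂μ :=
    integral_nonneg fun q => abs_nonneg _
  rw [Real.dist_eq, sub_zero, abs_of_nonneg hnonneg]
  calc ∫ q, |F (g n q) - F (glim q)| ∂μ ≤ _ := hstep
    _ < ε := by rw [heq1, heq3]; linarith

/-- An almost-sure limit of one-parameter groups of measure-preserving
transformations of a Polish probability space is again measure-preserving and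
satisfies the group property almost surely. -/
theorem stmt10 {Q : Type*} [TopologicalSpace Q] [PolishSpace Q]
    [MeasurableSpace Q] [BorelSpace Q]
    (μ : Measure Q) [IsProbabilityMeasure μ]
    (Φ : ℕ → ℝ → Q → Q)
    (hmp : ∀ n t, MeasurePreserving (Φ n t) μ μ)
    (hgroup : ∀ n (s t : ℝ) (q : Q), Φ n (t + s) q = Φ n t (Φ n s q))
    (hid : ∀ n (q : Q), Φ n 0 q = q)
    (Φlim : ℝ → Q → Q) (hΦlimMeas : ∀ t, Measurable (Φlim t))
    (hconv : ∀ t : ℝ, ∀ᵐ q ∂μ,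
      Filter.Tendsto (fun n => Φ n t q) Filter.atTop (nhds (Φlim t q))) :
    (∀ t : ℝ, MeasurePreserving (Φlim t) μ μ) ∧
    (∀ s t : ℝ, ∀ᵐ q ∂μ, Φlim (t + s) q = Φlim t (Φlim s q)) := by
  letI := TopologicalSpace.upgradeIsCompletelyMetrizable Q
  have hnQ : Nonempty Q := by
    by_contra h
    rw [not_nonempty_iff] at h
    have h1 : μ Set.univ = 1 := measure_univ
    rw [Set.univ_eq_empty_iff.2 h, measure_empty] at h1
    exact zero_ne_one h1
  -- Part 1: the limit is measure preserving
  have part1 : ∀ t : ℝ, MeasurePreserving (Φlim t) μ μ := by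
    intro t
    refine ⟨hΦlimMeas t, ?_⟩
    have : IsFiniteMeasure (Measure.map (Φlim t) μ) :=
      Measure.isFiniteMeasure_map μ (Φlim t)
    apply MeasureTheory.ext_of_forall_lintegral_eq_of_IsFiniteMeasure
    intro f
    rw [lintegral_map (f.continuous.measurable.coe_nnreal_ennreal) (hΦlimMeas t)]
    obtain ⟨C, hC⟩ := f.bounded
    set x0 : Q := Classical.arbitrary Q
    have hbdd : ∀ x : Q, (f x : ENNReal) ≤ ENNReal.ofReal (C + (f x0 : ℝ)) := by
      intro x
      have h1 : dist (f x) (f x0) ≤ C := hC x x0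
      have h2 : (f x : ℝ) - (f x0 : ℝ) ≤ C := by
        rw [NNReal.dist_eq] at h1
        exact (le_abs_self _).trans h1
      calc (f x : ENNReal) = ENNReal.ofReal (f x : ℝ) := ENNReal.ofReal_coe_nnreal.symm
        _ ≤ ENNReal.ofReal (C + (f x0 : ℝ)) := ENNReal.ofReal_le_ofReal (by linarith)
    have hn : ∀ n, ∫⁻ x, (f (Φ n t x) : ENNReal) ∂μ = ∫⁻ x, (f x : ENNReal) ∂μ :=
      fun n => (hmp n t).lintegral_comp f.continuous.measurable.coe_nnreal_ennreal
    have htend : Tendsto (fun n => ∫⁻ x, (f (Φ n t x) : ENNReal) ∂μ) atTop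
        (nhds (∫⁻ x, (f (Φlim t x) : ENNReal) ∂μ)) := by
      apply tendsto_lintegral_of_dominated_convergence
        (fun _ => ENNReal.ofReal (C + (f x0 : ℝ)))
      · exact fun n => (f.continuous.measurable.comp (hmp n t).measurable).coe_nnreal_ennreal
      · exact fun n => Eventually.of_forall fun x => hbdd _
      · simp [ENNReal.ofReal_ne_top]
      · filter_upwards [hconv t] with q hq
        exact (ENNReal.continuous_coe.tendsto _).comp ((f.continuous.tendsto _).comp hq)
    simp only [hn] at htend
    exact tendsto_nhds_unique htend tendsto_const_nhds
  refine ⟨part1, ?_⟩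
  -- Part 2: the group property almost surely
  intro s t
  obtain ⟨u, hu⟩ := TopologicalSpace.exists_dense_seq Q
  have key : ∀ k : ℕ, ∀ᵐ q ∂μ,
      min (dist (Φlim (t + s) q) (u k)) 1 = min (dist (Φlim t (Φlim s q)) (u k)) 1 := by
    intro k
    set f : Q → ℝ := fun x => min (dist x (u k)) 1 with hf
    have hfc : Continuous f := (continuous_id.dist continuous_const).min continuous_const
    have hfnn : ∀ x, 0 ≤ f x := fun x => le_min dist_nonneg zero_le_one
    have hfb : ∀ x, |f x| ≤ 1 := fun x => by
      rw [abs_of_nonneg (hfnn x)]; exact min_le_right _ _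
    set F : Q → ℝ := fun x => f (Φlim t x) with hF
    have hFm : Measurable F := hfc.measurable.comp (hΦlimMeas t)
    have hFb : ∀ x, |F x| ≤ 1 := fun x => hfb _
    -- a_n → 0
    have ha : Tendsto (fun n => ∫ q, |f (Φ n (t + s) q) - f (Φlim (t + s) q)| ∂μ)
        atTop (nhds 0) := by
      apply dctAbs'
      · exact fun n => ((hfc.measurable.comp (hmp n (t + s)).measurable).sub
          (hfc.measurable.comp (hΦlimMeas (t + s)))).abs.aestronglyMeasurable
      · intro n q
        rw [abs_abs]
        calc |f (Φ n (t + s) q) - f (Φlim (t + s) q)|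
            ≤ |f (Φ n (t + s) q)| + |f (Φlim (t + s) q)| := abs_sub _ _
          _ ≤ 2 := by have := hfb (Φ n (t + s) q); have := hfb (Φlim (t + s) q); linarith
      · filter_upwards [hconv (t + s)] with q hq
        have : Tendsto (fun n => f (Φ n (t + s) q)) atTop (nhds (f (Φlim (t + s) q))) :=
          (hfc.tendsto _).comp hq
        simpa using (this.sub (tendsto_const_nhds (x := f (Φlim (t + s) q)))).abs
    -- b1_n → 0 (before composition)
    have hb1 : Tendsto (fun n => ∫ x, |f (Φ n t x) - F x| ∂μ) atTop (nhds 0) := by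
      apply dctAbs'
      · exact fun n => ((hfc.measurable.comp (hmp n t).measurable).sub hFm).abs.aestronglyMeasurable
      · intro n q
        rw [abs_abs]
        calc |f (Φ n t q) - F q| ≤ |f (Φ n t q)| + |F q| := abs_sub _ _
          _ ≤ 2 := by have := hfb (Φ n t q); have := hFb q; linarith
      · filter_upwards [hconv t] with q hq
        have : Tendsto (fun n => f (Φ n t q)) atTop (nhds (F q)) := (hfc.tendsto _).comp hq
        simpa using (this.sub (tendsto_const_nhds (x := F q))).abs
    -- b2_n → 0 (lemA)
    have hb2 : Tendsto (fun n => ∫ q, |F (Φ n s q) - F (Φlim s q)| ∂μ) atTop (nhds 0) :=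
      lemA' (fun n => hmp n s) (part1 s) (hconv s) hFm hFb
    -- the main quantity is 0
    have measmain : Measurable fun q => |f (Φlim (t + s) q) - F (Φlim s q)| :=
      ((hfc.measurable.comp (hΦlimMeas (t + s))).sub (hFm.comp (hΦlimMeas s))).abs
    have intmain : Integrable (fun q => |f (Φlim (t + s) q) - F (Φlim s q)|) μ :=
      (integrable_const (2:ℝ)).mono' measmain.aestronglyMeasurable
        (Eventually.of_forall fun q => by
          rw [Real.norm_eq_abs, abs_abs]
          calc |f (Φlim (t + s) q) - F (Φlim s q)|
              ≤ |f (Φlim (t + s) q)| + |F (Φlim s q)| := abs_sub _ _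
            _ ≤ 2 := by have := hfb (Φlim (t + s) q); have := hFb (Φlim s q); linarith)
    have hc : ∫ q, |f (Φlim (t + s) q) - F (Φlim s q)| ∂μ = 0 := by
      have hle : ∀ n, ∫ q, |f (Φlim (t + s) q) - F (Φlim s q)| ∂μ
          ≤ (∫ q, |f (Φ n (t + s) q) - f (Φlim (t + s) q)| ∂μ)
            + ((∫ x, |f (Φ n t x) - F x| ∂μ)
              + ∫ q, |F (Φ n s q) - F (Φlim s q)| ∂μ) := by
        intro n
        have meas1 : Measurable fun q => |f (Φ n (t + s) q) - f (Φlim (t + s) q)| :=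
          ((hfc.measurable.comp (hmp n (t + s)).measurable).sub
            (hfc.measurable.comp (hΦlimMeas (t + s)))).abs
        have meas2 : Measurable fun q => |f (Φ n (t + s) q) - F (Φ n s q)| := by
          have : (fun q => |f (Φ n (t + s) q) - F (Φ n s q)|)
              = fun q => |f (Φ n t (Φ n s q)) - F (Φ n s q)| := by
            funext q; rw [hgroup n s t q]
          rw [this]
          exact (((hfc.measurable.comp (hmp n t).measurable).sub hFm).abs).comp
            (hmp n s).measurable
        have meas3 : Measurable fun q => |F (Φ n s q) - F (Φlim s q)| :=
          ((hFm.comp (hmp n s).measurable).sub (hFm.comp (hΦlimMeas s))).abs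
        have bddint : ∀ {v : Q → ℝ}, Measurable v → (∀ q, |v q| ≤ 2) → Integrable v μ :=
          fun hv hvb => (integrable_const (2:ℝ)).mono' hv.aestronglyMeasurable
            (Eventually.of_forall fun q => by rw [Real.norm_eq_abs]; exact hvb q)
        have habs2 : ∀ (a b : Q), |f a - f b| ≤ 2 := fun a b => by
          calc |f a - f b| ≤ |f a| + |f b| := abs_sub _ _
            _ ≤ 2 := by have := hfb a; have := hfb b; linarith
        have int1 : Integrable (fun q => |f (Φ n (t + s) q) - f (Φlim (t + s) q)|) μ :=
          bddint meas1 fun q => by rw [abs_abs]; exact habs2 _ _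
        have int2 : Integrable (fun q => |f (Φ n (t + s) q) - F (Φ n s q)|) μ :=
          bddint meas2 fun q => by rw [abs_abs]; exact habs2 _ _
        have int3 : Integrable (fun q => |F (Φ n s q) - F (Φlim s q)|) μ :=
          bddint meas3 fun q => by rw [abs_abs]; exact habs2 _ _
        have e1 : ∫ q, (|f (Φ n (t + s) q) - f (Φlim (t + s) q)|
              + (|f (Φ n (t + s) q) - F (Φ n s q)| + |F (Φ n s q) - F (Φlim s q)|)) ∂μ
            = ∫ q, |f (Φ n (t + s) q) - f (Φlim (t + s) q)| ∂μ
              + ∫ q, (|f (Φ n (t + s) q) - F (Φ n s q)| + |F (Φ n s q) - F (Φlim s q)|) ∂μ :=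
          integral_add int1 (int2.add int3)
        have e2 : ∫ q, (|f (Φ n (t + s) q) - F (Φ n s q)| + |F (Φ n s q) - F (Φlim s q)|) ∂μ
            = ∫ q, |f (Φ n (t + s) q) - F (Φ n s q)| ∂μ
              + ∫ q, |F (Φ n s q) - F (Φlim s q)| ∂μ :=
          integral_add int2 int3
        have step1 : ∫ q, |f (Φlim (t + s) q) - F (Φlim s q)| ∂μ
            ≤ (∫ q, |f (Φ n (t + s) q) - f (Φlim (t + s) q)| ∂μ)
              + ((∫ q, |f (Φ n (t + s) q) - F (Φ n s q)| ∂μ)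
                + ∫ q, |F (Φ n s q) - F (Φlim s q)| ∂μ) := by
          rw [← e2, ← e1]
          refine integral_mono intmain (int1.add (int2.add int3)) fun q => ?_
          calc |f (Φlim (t + s) q) - F (Φlim s q)|
              ≤ |f (Φlim (t + s) q) - F (Φ n s q)| + |F (Φ n s q) - F (Φlim s q)| :=
                abs_sub_le _ _ _
            _ ≤ (|f (Φlim (t + s) q) - f (Φ n (t + s) q)| + |f (Φ n (t + s) q) - F (Φ n s q)|)
                + |F (Φ n s q) - F (Φlim s q)| := by
                have := abs_sub_le (f (Φlim (t + s) q)) (f (Φ n (t + s) q)) (F (Φ n s q))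
                linarith
            _ = |f (Φ n (t + s) q) - f (Φlim (t + s) q)| + (|f (Φ n (t + s) q) - F (Φ n s q)|
                + |F (Φ n s q) - F (Φlim s q)|) := by rw [abs_sub_comm]; ring
        have step2 : ∫ q, |f (Φ n (t + s) q) - F (Φ n s q)| ∂μ
            = ∫ x, |f (Φ n t x) - F x| ∂μ := by
          have : (fun q => |f (Φ n (t + s) q) - F (Φ n s q)|)
              = fun q => |f (Φ n t (Φ n s q)) - F (Φ n s q)| := by
            funext q; rw [hgroup n s t q]
          rw [this]
          exact intComp' (hmp n s) ((hfc.measurable.comp (hmp n t).measurable).sub hFm).abs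
        rw [step2] at step1
        exact step1
      have htot : Tendsto (fun n => (∫ q, |f (Φ n (t + s) q) - f (Φlim (t + s) q)| ∂μ)
          + ((∫ x, |f (Φ n t x) - F x| ∂μ)
            + ∫ q, |F (Φ n s q) - F (Φlim s q)| ∂μ)) atTop (nhds 0) := by
        have := ha.add (hb1.add hb2)
        simpa using this
      have hle0 : ∫ q, |f (Φlim (t + s) q) - F (Φlim s q)| ∂μ ≤ 0 :=
        ge_of_tendsto' htot hle
      exact le_antisymm hle0 (integral_nonneg fun q => abs_nonneg _)
    have := (integral_eq_zero_iff_of_nonneg (fun q => abs_nonneg _) intmain).1 hc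
    filter_upwards [this] with q hq
    have : |f (Φlim (t + s) q) - F (Φlim s q)| = 0 := hq
    have := abs_eq_zero.1 this
    have := sub_eq_zero.1 this
    simpa [hf, hF] using this
  have keyall : ∀ᵐ q ∂μ, ∀ k : ℕ,
      min (dist (Φlim (t + s) q) (u k)) 1 = min (dist (Φlim t (Φlim s q)) (u k)) 1 :=
    ae_all_iff.2 key
  filter_upwards [keyall] with q hq
  set y := Φlim (t + s) q
  set z := Φlim t (Φlim s q)
  have hdist : ∀ ε : ℝ, 0 < ε → dist y z ≤ ε := by
    intro ε hε
    set δ := min (ε/2) (1/2) with hδ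
    have hδpos : 0 < δ := lt_min (by linarith) (by norm_num)
    have hδle : δ ≤ 1/2 := min_le_right _ _
    obtain ⟨k, hk⟩ := Metric.denseRange_iff.1 hu y δ hδpos
    have hyk1 : dist y (u k) < 1 := lt_of_lt_of_le hk (by linarith)
    have h1 : min (dist y (u k)) 1 = dist y (u k) := min_eq_left hyk1.le
    have h2 : dist z (u k) = dist y (u k) := by
      have hzk := hq k
      rw [h1] at hzk
      rcases le_or_gt 1 (dist z (u k)) with h | h
      · rw [min_eq_right h] at hzk
        exact absurd hzk.symm (ne_of_gt hyk1)
      · rw [min_eq_left h.le] at hzk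
        exact hzk.symm
    have hδε : δ ≤ ε/2 := min_le_left _ _
    calc dist y z ≤ dist y (u k) + dist (u k) z := dist_triangle _ _ _
      _ = dist y (u k) + dist z (u k) := by rw [dist_comm (u k) z]
      _ ≤ δ + δ := by rw [h2]; linarith
      _ ≤ ε := by linarith
  have : dist y z ≤ 0 := le_of_forall_pos_le_add (by intro ε hε; simpa using hdist ε hε)
  exact eq_of_dist_eq_zero (le_antisymm this dist_nonneg)
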